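/- Let α ∈ (0, 2] with α ≠ 1, β ∈ [−1, 1], a ∈ ℝ, and let θ, A be reals with 0 < A < θ and θ − A < a < θ + A. For each γ > 0 let μ_γ be a probability measure on ℝ whose characteristic function satisfies, for all ω ∈ ℝ, φ_{μ_γ}(ω) = exp( i·a·ω − γ·|ω|^α·(1 + i·β·sign(ω)·tan(απ/2)) ). Let qX, qZ, qXZ be nonnegative reals with qX + qZ + qXZ = 1, set P_γ = μ_γ((θ − A, θ + A)) and F_γ = 1/2 + P_γ·(qX + qZ + qXZ·P_γ)/2. Then P_γ → 1 and F_γ → 1 as γ → 0⁺. -/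

import Mathlib

open MeasureTheory Filter Set

-- integrability of bounded exp
lemma aux_exp_int (μ : Measure ℝ) [IsProbabilityMeasure μ] (c : ℝ) :
    Integrable (fun x : ℝ => Complex.exp (Complex.I * c * x)) μ := by
  refine (integrable_const (1 : ℝ)).mono' ?_ ?_
  · exact (Complex.continuous_exp.comp (by continuity)).aestronglyMeasurable
  · refine Filter.Eventually.of_forall fun x => ?_
    have : ‖Complex.exp (Complex.I * c * x)‖ = 1 := by
      rw [Complex.norm_exp]
      simp [Complex.mul_re]
    simp [this]

lemma aux_cos_int (μ : Measure ℝ) [IsProbabilityMeasure μ] (a ω : ℝ) :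
    Integrable (fun x : ℝ => Real.cos (ω * (x - a))) μ := by
  refine (integrable_const (1 : ℝ)).mono' ?_ ?_
  · exact (Real.continuous_cos.comp (by continuity)).aestronglyMeasurable
  · exact Filter.Eventually.of_forall fun x => by
      simpa using Real.abs_cos_le_one (ω * (x - a))

lemma aux_cos_integral (μ : Measure ℝ) [IsProbabilityMeasure μ] (a ω : ℝ) (w : ℂ)
    (h : ∫ x, Complex.exp (Complex.I * ω * x) ∂μ = Complex.exp (Complex.I * a * ω - w)) :
    ∫ x, Real.cos (ω * (x - a)) ∂μ = (Complex.exp (-w)).re := by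
  have key : ∫ x, Complex.exp (Complex.I * ω * (x - a)) ∂μ = Complex.exp (-w) := by
    have h1 : ∀ x : ℝ, Complex.exp (Complex.I * ω * ((x : ℂ) - a))
        = Complex.exp (-(Complex.I * a * ω)) * Complex.exp (Complex.I * ω * x) := by
      intro x; rw [← Complex.exp_add]; ring_nf
    simp_rw [h1]
    rw [integral_const_mul, h, ← Complex.exp_add]
    ring_nf
  have h2 : ∀ x : ℝ, Real.cos (ω * (x - a))
      = (Complex.exp (Complex.I * ω * ((x : ℂ) - a))).re := by
    intro x
    have : Complex.I * ω * ((x : ℂ) - a) = ((ω * (x - a) : ℝ) : ℂ) * Complex.I := by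
      push_cast; ring
    rw [this, Complex.exp_ofReal_mul_I_re]
  simp_rw [h2]
  have hint : Integrable (fun x : ℝ => Complex.exp (Complex.I * ω * ((x : ℂ) - a))) μ := by
    refine (integrable_const (1 : ℝ)).mono' ?_ ?_
    · exact (Complex.continuous_exp.comp (by continuity)).aestronglyMeasurable
    · refine Filter.Eventually.of_forall fun x => ?_
      have : ‖Complex.exp (Complex.I * ω * ((x : ℂ) - a))‖ = 1 := by
        rw [Complex.norm_exp]
        have : (Complex.I * ω * ((x : ℂ) - a)).re = 0 := by
          simp [Complex.mul_re, Complex.mul_im]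
        rw [this, Real.exp_zero]
      simp [this]
  calc ∫ x, (Complex.exp (Complex.I * ω * ((x : ℂ) - a))).re ∂μ
      = (∫ x, Complex.exp (Complex.I * ω * ((x : ℂ) - a)) ∂μ).re := by
        simpa [RCLike.re_to_complex] using integral_re hint
    _ = (Complex.exp (-w)).re := by rw [key]

-- inner integral lower bound
lemma aux_inner (u y : ℝ) (hu : 0 < u) (hy : 2 / u ≤ |y|) :
    u / 2 ≤ ∫ ω in Ioc (0:ℝ) u, (1 - Real.cos (ω * y)) := by
  have hy0 : y ≠ 0 := by
    intro h; rw [h] at hy; simp at hy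
    have := div_pos (by norm_num : (0:ℝ) < 2) hu
    linarith
  rw [← intervalIntegral.integral_of_le hu.le]
  have hc : ∫ ω in (0:ℝ)..u, Real.cos (ω * y) = y⁻¹ * Real.sin (u * y) := by
    rw [intervalIntegral.integral_comp_mul_right Real.cos hy0]
    simp [integral_cos, smul_eq_mul]
  have hsub : ∫ ω in (0:ℝ)..u, (1 - Real.cos (ω * y))
      = u - y⁻¹ * Real.sin (u * y) := by
    have hcont : Continuous fun ω : ℝ => Real.cos (ω * y) := by continuity
    rw [intervalIntegral.integral_sub intervalIntegrable_const (hcont.intervalIntegrable 0 u)]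
    simp [hc]
  rw [hsub]
  have h1 : |y⁻¹ * Real.sin (u * y)| ≤ u / 2 := by
    rw [abs_mul, abs_inv]
    have h2 : |Real.sin (u * y)| ≤ 1 := Real.abs_sin_le_one _
    have h3 : (0:ℝ) < 2 / u := by positivity
    have h4 : |y|⁻¹ ≤ u / 2 := by
      calc |y|⁻¹ ≤ (2 / u)⁻¹ := by
            apply inv_anti₀ h3 hy
        _ = u / 2 := by rw [inv_div]
    calc |y|⁻¹ * |Real.sin (u * y)| ≤ |y|⁻¹ * 1 := by
          exact mul_le_mul_of_nonneg_left h2 (by positivity)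
      _ ≤ u / 2 := by simpa using h4
  have := neg_abs_le (y⁻¹ * Real.sin (u * y))
  linarith [abs_le.mp h1]

lemma aux_key (α β a u C : ℝ) (hα : 0 < α) (hu : 0 < u)
    (hC : C = u ^ α * (1 + |β| * |Real.tan (α * Real.pi / 2)|))
    (μ : Measure ℝ) [IsProbabilityMeasure μ] (γ : ℝ) (hγ : 0 < γ) (hγC : γ * C ≤ 1)
    (hchar : ∀ ω : ℝ,
      ∫ x, Complex.exp (Complex.I * ω * x) ∂μ
        = Complex.exp (Complex.I * a * ω -
            (γ : ℂ) * ((|ω| ^ α : ℝ) : ℂ) *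
              (1 + Complex.I * (β : ℂ) * ((Real.sign ω : ℝ) : ℂ) *
                ((Real.tan (α * Real.pi / 2) : ℝ) : ℂ)))) :
    (μ {x : ℝ | 2 / u ≤ |x - a|}).toReal ≤ 4 * (γ * C) := by
  set ν := volume.restrict (Ioc (0:ℝ) u) with hν
  haveI : IsFiniteMeasure ν := by
    constructor
    rw [hν, Measure.restrict_apply_univ, Real.volume_Ioc]
    exact ENNReal.ofReal_lt_top
  set S := {x : ℝ | 2 / u ≤ |x - a|} with hSdef
  have hS : MeasurableSet S :=
    (isClosed_le continuous_const ((continuous_id.sub continuous_const).abs)).measurableSet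
  -- integrability of the uncurried function
  have hFint : Integrable (Function.uncurry fun x ω : ℝ => 1 - Real.cos (ω * (x - a)))
      (μ.prod ν) := by
    refine (integrable_const (2 : ℝ)).mono' ?_ ?_
    · have : Continuous (Function.uncurry fun x ω : ℝ => 1 - Real.cos (ω * (x - a))) :=
        continuous_const.sub (Real.continuous_cos.comp
          (continuous_snd.mul (continuous_fst.sub continuous_const)))
      exact this.aestronglyMeasurable
    · refine Filter.Eventually.of_forall fun p => ?_
      have h1 := Real.neg_one_le_cos (p.2 * (p.1 - a))
      have h2 := Real.cos_le_one (p.2 * (p.1 - a))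
      rw [Function.uncurry, Real.norm_eq_abs, abs_le]
      constructor <;> simp <;> linarith
  have hI : Integrable (fun x => ∫ ω, (1 - Real.cos (ω * (x - a))) ∂ν) μ :=
    hFint.integral_prod_left
  have hnn : ∀ x, 0 ≤ ∫ ω, (1 - Real.cos (ω * (x - a))) ∂ν := fun x =>
    integral_nonneg fun ω => by have := Real.cos_le_one (ω * (x - a)); simp; linarith
  have step1 : u / 2 * (μ S).toReal ≤ ∫ x, ∫ ω, (1 - Real.cos (ω * (x - a))) ∂ν ∂μ := by
    calc u / 2 * (μ S).toReal
        ≤ ∫ x in S, ∫ ω, (1 - Real.cos (ω * (x - a))) ∂ν ∂μ := by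
          refine setIntegral_ge_of_const_le_real hS (measure_ne_top μ S) (fun x hx => ?_)
            hI.integrableOn
          exact aux_inner u (x - a) hu hx
      _ ≤ _ := setIntegral_le_integral hI (Filter.Eventually.of_forall hnn)
  have step2 : ∫ x, ∫ ω, (1 - Real.cos (ω * (x - a))) ∂ν ∂μ
      = ∫ ω, ∫ x, (1 - Real.cos (ω * (x - a))) ∂μ ∂ν :=
    integral_integral_swap hFint
  have houter : ∀ ω ∈ Ioc (0:ℝ) u,
      (∫ x, (1 - Real.cos (ω * (x - a))) ∂μ) ≤ 2 * (γ * C) := by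
    intro ω hω
    set w : ℂ := (γ : ℂ) * ((|ω| ^ α : ℝ) : ℂ) *
      (1 + Complex.I * (β : ℂ) * ((Real.sign ω : ℝ) : ℂ) *
        ((Real.tan (α * Real.pi / 2) : ℝ) : ℂ)) with hw
    have hcos := aux_cos_integral μ a ω w (hchar ω)
    have hsplit : ∫ x, (1 - Real.cos (ω * (x - a))) ∂μ
        = 1 - (Complex.exp (-w)).re := by
      rw [integral_sub (integrable_const 1) (aux_cos_int μ a ω), hcos]
      simp
    rw [hsplit]
    have hwabs : ‖w‖ ≤ γ * C := by
      rw [hw]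
      rw [norm_mul, norm_mul]
      have h1 : ‖((γ : ℝ) : ℂ)‖ = γ := by
        rw [Complex.norm_real, Real.norm_eq_abs, abs_of_pos hγ]
      have h2 : ‖((|ω| ^ α : ℝ) : ℂ)‖ ≤ u ^ α := by
        rw [Complex.norm_real, Real.norm_eq_abs, abs_of_nonneg (Real.rpow_nonneg (abs_nonneg ω) α)]
        exact Real.rpow_le_rpow (abs_nonneg ω)
          (by rw [abs_of_pos hω.1]; exact hω.2) hα.le
      have h3 : ‖(1 + Complex.I * (β : ℂ) * ((Real.sign ω : ℝ) : ℂ) *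
          ((Real.tan (α * Real.pi / 2) : ℝ) : ℂ))‖
          ≤ 1 + |β| * |Real.tan (α * Real.pi / 2)| := by
        have hsgn : Real.sign ω = 1 := Real.sign_of_pos hω.1
        calc ‖(1 + Complex.I * (β : ℂ) * ((Real.sign ω : ℝ) : ℂ) *
              ((Real.tan (α * Real.pi / 2) : ℝ) : ℂ))‖
            ≤ ‖(1:ℂ)‖ + ‖(Complex.I * (β : ℂ) *
                ((Real.sign ω : ℝ) : ℂ) * ((Real.tan (α * Real.pi / 2) : ℝ) : ℂ))‖ :=
              norm_add_le _ _
          _ = 1 + |β| * |Real.tan (α * Real.pi / 2)| := by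
              rw [hsgn]
              rw [norm_mul, norm_mul, norm_mul, Complex.norm_I, Complex.norm_real,
                Complex.norm_real, Complex.norm_real]
              simp
      calc ‖((γ : ℝ) : ℂ)‖ * ‖((|ω| ^ α : ℝ) : ℂ)‖ *
            ‖(1 + Complex.I * (β : ℂ) * ((Real.sign ω : ℝ) : ℂ) *
              ((Real.tan (α * Real.pi / 2) : ℝ) : ℂ))‖
          ≤ γ * (u ^ α) * (1 + |β| * |Real.tan (α * Real.pi / 2)|) := by
            rw [h1]
            have hb0 : (0:ℝ) ≤ 1 + |β| * |Real.tan (α * Real.pi / 2)| := by positivity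
            refine mul_le_mul (mul_le_mul_of_nonneg_left h2 hγ.le) h3 (norm_nonneg _) ?_
            positivity
        _ = γ * C := by rw [hC]; ring
    have habs1 : ‖-w‖ ≤ 1 := by rw [norm_neg]; exact hwabs.trans hγC
    have hexp := Complex.norm_exp_sub_one_le habs1
    have hre : 1 - (Complex.exp (-w)).re ≤ ‖Complex.exp (-w) - 1‖ := by
      calc 1 - (Complex.exp (-w)).re = (1 - Complex.exp (-w)).re := by simp
        _ ≤ ‖1 - Complex.exp (-w)‖ := Complex.re_le_norm _
        _ = ‖Complex.exp (-w) - 1‖ := by rw [← norm_neg]; ring_nf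
    calc 1 - (Complex.exp (-w)).re ≤ ‖Complex.exp (-w) - 1‖ := hre
      _ ≤ 2 * ‖-w‖ := hexp
      _ = 2 * ‖w‖ := by rw [norm_neg]
      _ ≤ 2 * (γ * C) := by linarith [hwabs]
  have hg_int : Integrable (fun ω => ∫ x, (1 - Real.cos (ω * (x - a))) ∂μ) ν :=
    hFint.integral_prod_right
  have step3 : ∫ ω, ∫ x, (1 - Real.cos (ω * (x - a))) ∂μ ∂ν ≤ u * (2 * (γ * C)) := by
    have hmono : (fun ω => ∫ x, (1 - Real.cos (ω * (x - a))) ∂μ)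
        ≤ᵐ[ν] fun _ => 2 * (γ * C) := by
      rw [hν]
      exact (ae_restrict_mem measurableSet_Ioc).mono houter
    calc ∫ ω, ∫ x, (1 - Real.cos (ω * (x - a))) ∂μ ∂ν
        ≤ ∫ _ω, 2 * (γ * C) ∂ν := integral_mono_ae hg_int (integrable_const _) hmono
      _ = u * (2 * (γ * C)) := by
          rw [integral_const, hν, measureReal_def, Measure.restrict_apply_univ, Real.volume_Ioc,
            smul_eq_mul, sub_zero, ENNReal.toReal_ofReal hu.le]
  have hfin : u / 2 * (μ S).toReal ≤ u * (2 * (γ * C)) := by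
    rw [step2] at step1; exact step1.trans step3
  nlinarith [ENNReal.toReal_nonneg (a := μ S), hu]

/-- Only-if part of the infinite-variance (alpha-stable, `α ≠ 1`) forbidden-interval
theorem: if the location `a` lies inside the forbidden interval
`[θ − A, θ + A]`, then as the dispersion `γ → 0⁺` the detection parameter
`P_γ` tends to `1` and the teleportation fidelity tends to `1`. -/
theorem forbidden_interval_alpha_stable_only_if
    (α β a : ℝ) (hα : α ∈ Ioc (0 : ℝ) 2) (hα1 : α ≠ 1)
    (hβ : β ∈ Icc (-1 : ℝ) 1)
    (θ A : ℝ) (hA : 0 < A) (hAθ : A < θ)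
    (ha₁ : θ - A < a) (ha₂ : a < θ + A)
    (μ : ℝ → Measure ℝ) (hprob : ∀ γ, 0 < γ → IsProbabilityMeasure (μ γ))
    (hchar : ∀ γ, 0 < γ → ∀ ω : ℝ,
      ∫ x, Complex.exp (Complex.I * ω * x) ∂(μ γ)
        = Complex.exp (Complex.I * a * ω -
            (γ : ℂ) * ((|ω| ^ α : ℝ) : ℂ) *
              (1 + Complex.I * (β : ℂ) * ((Real.sign ω : ℝ) : ℂ) *
                ((Real.tan (α * Real.pi / 2) : ℝ) : ℂ))))
    (qX qZ qXZ : ℝ) (hqX : 0 ≤ qX) (hqZ : 0 ≤ qZ) (hqXZ : 0 ≤ qXZ)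
    (hsum : qX + qZ + qXZ = 1) :
    Tendsto (fun γ => ((μ γ) (Ioo (θ - A) (θ + A))).toReal)
      (nhdsWithin 0 (Ioi 0)) (nhds 1) ∧
    Tendsto (fun γ =>
        1 / 2 + ((μ γ) (Ioo (θ - A) (θ + A))).toReal *
          (qX + qZ + qXZ * ((μ γ) (Ioo (θ - A) (θ + A))).toReal) / 2)
      (nhdsWithin 0 (Ioi 0)) (nhds 1) := by
  obtain ⟨hα0, hα2⟩ := hα
  set m : ℝ := min (a - (θ - A)) (θ + A - a) with hm
  have hm0 : 0 < m := lt_min (by linarith) (by linarith)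
  set u : ℝ := 2 / m with hudef
  have hu : 0 < u := by positivity
  have h2u : 2 / u = m := by
    rw [hudef]; field_simp
  set C : ℝ := u ^ α * (1 + |β| * |Real.tan (α * Real.pi / 2)|) with hC
  have hC0 : 0 < C := by
    have := Real.rpow_pos_of_pos hu α
    positivity
  have hsub : (Ioo (θ - A) (θ + A))ᶜ ⊆ {x : ℝ | 2 / u ≤ |x - a|} := by
    intro x hx
    simp only [mem_compl_iff, mem_Ioo, not_and_or, not_lt] at hx
    simp only [mem_setOf_eq, h2u]
    rcases hx with hx | hx
    · rw [le_abs]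
      right
      have := min_le_left (a - (θ - A)) (θ + A - a)
      rw [← hm] at this
      linarith
    · rw [le_abs]
      left
      have := min_le_right (a - (θ - A)) (θ + A - a)
      rw [← hm] at this
      linarith
  set γ₀ : ℝ := 1 / C with hγ₀def
  have hγ₀ : 0 < γ₀ := by positivity
  -- key bounds
  have hkey : ∀ γ ∈ Ioc (0:ℝ) γ₀,
      1 - 4 * (γ * C) ≤ ((μ γ) (Ioo (θ - A) (θ + A))).toReal := by
    intro γ hγ
    haveI := hprob γ hγ.1
    have hγC : γ * C ≤ 1 := by
      have : γ ≤ 1 / C := hγ.2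
      rw [le_div_iff₀ hC0] at this
      linarith
    have h1 := aux_key α β a u C hα0 hu hC (μ γ) γ hγ.1 hγC (hchar γ hγ.1)
    have hcompl : ((μ γ) (Ioo (θ - A) (θ + A))ᶜ).toReal ≤ 4 * (γ * C) :=
      le_trans (ENNReal.toReal_mono (measure_ne_top _ _) (measure_mono hsub)) h1
    have hsum' : ((μ γ) (Ioo (θ - A) (θ + A))).toReal
        + ((μ γ) (Ioo (θ - A) (θ + A))ᶜ).toReal = 1 := by
      rw [← ENNReal.toReal_add (measure_ne_top _ _) (measure_ne_top _ _),
        measure_add_measure_compl measurableSet_Ioo, measure_univ]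
      simp
    linarith
  have hup : ∀ γ ∈ Ioi (0:ℝ), ((μ γ) (Ioo (θ - A) (θ + A))).toReal ≤ 1 := by
    intro γ hγ
    haveI := hprob γ hγ
    calc ((μ γ) (Ioo (θ - A) (θ + A))).toReal
        ≤ ((μ γ) univ).toReal :=
          ENNReal.toReal_mono (measure_ne_top _ _) (measure_mono (subset_univ _))
      _ = 1 := by rw [measure_univ]; simp
  have hL : Tendsto (fun γ : ℝ => 1 - 4 * (γ * C)) (nhdsWithin 0 (Ioi 0)) (nhds 1) := by
    have hc : Continuous fun γ : ℝ => 1 - 4 * (γ * C) :=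
      continuous_const.sub (continuous_const.mul (continuous_id.mul continuous_const))
    have h := (hc.tendsto 0).mono_left (nhdsWithin_le_nhds (s := Ioi (0:ℝ)))
    simpa using h
  have hmem : Ioc (0:ℝ) γ₀ ∈ nhdsWithin (0:ℝ) (Ioi 0) :=
    Ioc_mem_nhdsGT_of_mem ⟨le_rfl, hγ₀⟩
  have hP : Tendsto (fun γ => ((μ γ) (Ioo (θ - A) (θ + A))).toReal)
      (nhdsWithin 0 (Ioi 0)) (nhds 1) := by
    refine tendsto_of_tendsto_of_tendsto_of_le_of_le' hL tendsto_const_nhds ?_ ?_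
    · filter_upwards [hmem] with γ hγ using hkey γ hγ
    · filter_upwards [self_mem_nhdsWithin] with γ hγ using hup γ hγ
  refine ⟨hP, ?_⟩
  have hcont : Continuous fun p : ℝ => 1 / 2 + p * (qX + qZ + qXZ * p) / 2 :=
    continuous_const.add ((continuous_id.mul
      (continuous_const.add (continuous_const.mul continuous_id))).div_const 2)
  have hval : (1:ℝ) / 2 + 1 * (qX + qZ + qXZ * 1) / 2 = 1 := by
    rw [mul_one, one_mul, hsum]; norm_num
  have := (hcont.tendsto 1).comp hP
  rw [hval] at this
  exact this
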